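/- Shrinkage factor for strong signals (Proposition 1(a), known-variance form). Fix ε > 0. There exist constants γ > 0 and C > 0, depending only on σ, b and ε, such that for every integer p ≥ 2, every τ > 0, and every d ∈ ℝ with |d| ≥ (a/2 + ε)·√(τ (log p)/2), the random variable X ~ N(d, στ) satisfies E[1 − q(X)] ≤ C·p^{−γ}. -/

import Mathlib

open MeasureTheory ProbabilityTheory

/-- The constant `a = (2+b)√σ + √((2+b)²σ + 4)` from Proposition 1. -/
noncomputable def shrinkA (σ b : ℝ) : ℝ :=
  (2 + b) * Real.sqrt σ + Real.sqrt ((2 + b) ^ 2 * σ + 4)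

/-- The shrinkage factor `q(x) = g₁(|x|)/(g₀(|x|) + g₁(|x|))`, where `g₀` is the density of
`N(0, τ)` and `g₁` is the density of `N(a·√(τ log p / 2), τ)`. -/
noncomputable def shrinkQ (σ b : ℝ) (p : ℕ) (τ : ℝ) (x : ℝ) : ℝ :=
  gaussianPDFReal (shrinkA σ b * Real.sqrt (τ * Real.log p / 2)) τ.toNNReal |x| /
    (gaussianPDFReal 0 τ.toNNReal |x| +
      gaussianPDFReal (shrinkA σ b * Real.sqrt (τ * Real.log p / 2)) τ.toNNReal |x|)

set_option maxHeartbeats 1000000 in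
/-- **Shrinkage factor for strong signals** (Proposition 1(a), known-variance form).
There are constants `γ, C > 0` depending only on `σ, b, ε` such that for all `p ≥ 2`, `τ > 0`
and `|d| ≥ (a/2 + ε)·√(τ log p / 2)`, if `X ~ N(d, στ)` then `E[1 − q(X)] ≤ C·p^{−γ}`. -/
theorem strong_signal_shrinkage (σ b ε : ℝ) (hσ : 0 < σ) (hb : 0 < b) (hε : 0 < ε) :
    ∃ γ > (0 : ℝ), ∃ C > (0 : ℝ), ∀ p : ℕ, 2 ≤ p → ∀ τ : ℝ, 0 < τ → ∀ d : ℝ,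
      (shrinkA σ b / 2 + ε) * Real.sqrt (τ * Real.log p / 2) ≤ |d| →
      ∫ x, (1 - shrinkQ σ b p τ x) ∂(gaussianReal d (σ * τ).toNNReal) ≤ C * (p : ℝ) ^ (-γ) := by
  set A : ℝ := shrinkA σ b with hAdef
  have hA : 0 < A := by
    have h1 : 0 < (2 + b) * Real.sqrt σ :=
      mul_pos (by linarith) (Real.sqrt_pos.mpr hσ)
    have h2 : 0 ≤ Real.sqrt ((2 + b) ^ 2 * σ + 4) := Real.sqrt_nonneg _
    rw [hAdef, shrinkA]; linarith
  set γ₁ : ℝ := ε ^ 2 / (32 * σ) with hγ₁def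
  have hγ₁ : 0 < γ₁ := by positivity
  refine ⟨min γ₁ (ε * A / 4), lt_min hγ₁ (by positivity),
    (A + ε) * (Real.sqrt (2 * Real.pi * σ))⁻¹ * (Real.sqrt (2 * γ₁))⁻¹ + 1, by positivity,
    fun p hp τ hτ d hd => ?_⟩
  have hp1 : (1 : ℝ) ≤ (p : ℝ) := by exact_mod_cast Nat.one_le_of_lt hp
  have hp0 : (0 : ℝ) < (p : ℝ) := lt_of_lt_of_le one_pos hp1
  set L : ℝ := Real.log p with hLdef
  have hL : 0 < L := Real.log_pos (by exact_mod_cast hp)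
  set s : ℝ := Real.sqrt (τ * L / 2) with hsdef
  have hs : 0 < s := Real.sqrt_pos.mpr (by positivity)
  have hs2 : s ^ 2 = τ * L / 2 := Real.sq_sqrt (by positivity)
  set t : ℝ := (A / 2 + ε / 2) * s with htdef
  have ht : 0 < t := by positivity
  set r : ℝ := (ε / 2) * s with hrdef
  have hr : 0 < r := by positivity
  set m : ℝ := A * s with hmdef
  have hτc : ((τ.toNNReal : ℝ)) = τ := Real.coe_toNNReal τ hτ.le
  have hτn : τ.toNNReal ≠ 0 := by
    simp only [ne_eq, Real.toNNReal_eq_zero, not_le]; exact hτ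
  have hστ : (0 : ℝ) < σ * τ := mul_pos hσ hτ
  have hστc : (((σ * τ).toNNReal : ℝ)) = σ * τ := Real.coe_toNNReal _ hστ.le
  have hστn : (σ * τ).toNNReal ≠ 0 := by
    simp only [ne_eq, Real.toNNReal_eq_zero, not_le]; exact hστ
  have hSm : MeasurableSet (Set.Ioo (-t) t) := measurableSet_Ioo
  -- pointwise bound
  have key : ∀ x : ℝ, 1 - shrinkQ σ b p τ x ≤
      Set.indicator (Set.Ioo (-t) t) (fun _ => (1 : ℝ)) x + Real.exp (-(ε * A / 4) * L) := by
    intro x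
    have h0 : 0 < gaussianPDFReal 0 τ.toNNReal |x| := gaussianPDFReal_pos _ _ _ hτn
    have h1 : 0 < gaussianPDFReal m τ.toNNReal |x| := gaussianPDFReal_pos _ _ _ hτn
    have hms : shrinkA σ b * Real.sqrt (τ * Real.log p / 2) = m := rfl
    have hq : 1 - shrinkQ σ b p τ x =
        gaussianPDFReal 0 τ.toNNReal |x| /
          (gaussianPDFReal 0 τ.toNNReal |x| + gaussianPDFReal m τ.toNNReal |x|) := by
      rw [shrinkQ, hms]
      field_simp
      ring
    by_cases hx : x ∈ Set.Ioo (-t) t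
    · rw [Set.indicator_of_mem hx, hq]
      have hle : gaussianPDFReal 0 τ.toNNReal |x| /
          (gaussianPDFReal 0 τ.toNNReal |x| + gaussianPDFReal m τ.toNNReal |x|) ≤ 1 := by
        rw [div_le_one (by linarith)]; linarith
      have := Real.exp_pos (-(ε * A / 4) * L)
      linarith
    · rw [Set.indicator_of_notMem hx, hq]
      have hxt : t ≤ |x| := by
        by_contra h
        exact hx (Set.mem_Ioo.mpr (abs_lt.mp (not_le.mp h)))
      have step1 : gaussianPDFReal 0 τ.toNNReal |x| /
          (gaussianPDFReal 0 τ.toNNReal |x| + gaussianPDFReal m τ.toNNReal |x|) ≤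
          gaussianPDFReal 0 τ.toNNReal |x| / gaussianPDFReal m τ.toNNReal |x| := by
        gcongr <;> linarith
      have step2 : gaussianPDFReal 0 τ.toNNReal |x| / gaussianPDFReal m τ.toNNReal |x| ≤
          Real.exp (-(ε * A / 4) * L) := by
        rw [gaussianPDFReal, gaussianPDFReal, hτc,
          mul_div_mul_left _ _ (by positivity : (Real.sqrt (2 * Real.pi * τ))⁻¹ ≠ 0),
          ← Real.exp_sub]
        apply Real.exp_le_exp.mpr
        have heq : -(|x| - 0) ^ 2 / (2 * τ) - -(|x| - m) ^ 2 / (2 * τ) =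
            (m ^ 2 - 2 * m * |x|) / (2 * τ) := by ring
        rw [heq, div_le_iff₀ (by positivity)]
        have hmx : 2 * m * t ≤ 2 * m * |x| :=
          mul_le_mul_of_nonneg_left hxt (by positivity)
        have hkey : m ^ 2 - 2 * m * t = -(ε * A) * s ^ 2 := by rw [hmdef, htdef]; ring
        have h5 : -(ε * A) * s ^ 2 = -(ε * A / 4) * L * (2 * τ) := by rw [hs2]; ring
        linarith
      simp only [zero_add]
      exact step1.trans step2
  have hnn : ∀ x : ℝ, 0 ≤ 1 - shrinkQ σ b p τ x := by
    intro x
    have h0 : 0 < gaussianPDFReal 0 τ.toNNReal |x| := gaussianPDFReal_pos _ _ _ hτn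
    have h1 : 0 < gaussianPDFReal (shrinkA σ b * Real.sqrt (τ * Real.log p / 2))
        τ.toNNReal |x| := gaussianPDFReal_pos _ _ _ hτn
    have : shrinkQ σ b p τ x ≤ 1 := by
      rw [shrinkQ, div_le_one (by linarith)]; linarith
    linarith
  -- integrate the pointwise bound
  set μ : Measure ℝ := gaussianReal d (σ * τ).toNNReal with hμdef
  have hindint : Integrable (Set.indicator (Set.Ioo (-t) t) (fun _ => (1 : ℝ))) μ :=
    (integrable_const (1 : ℝ)).indicator hSm
  have hint : Integrable (fun x => Set.indicator (Set.Ioo (-t) t) (fun _ => (1 : ℝ)) x +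
      Real.exp (-(ε * A / 4) * L)) μ := hindint.add (integrable_const _)
  have hI1 : ∫ x, (1 - shrinkQ σ b p τ x) ∂μ ≤
      (μ (Set.Ioo (-t) t)).toReal + Real.exp (-(ε * A / 4) * L) := by
    calc ∫ x, (1 - shrinkQ σ b p τ x) ∂μ
        ≤ ∫ x, (Set.indicator (Set.Ioo (-t) t) (fun _ => (1 : ℝ)) x +
            Real.exp (-(ε * A / 4) * L)) ∂μ :=
          integral_mono_of_nonneg (Filter.Eventually.of_forall hnn) hint
            (Filter.Eventually.of_forall key)
      _ = (μ (Set.Ioo (-t) t)).toReal + Real.exp (-(ε * A / 4) * L) := by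
          rw [integral_add hindint (integrable_const _), integral_indicator_const _ hSm,
            integral_const, probReal_univ]
          rw [one_smul, smul_eq_mul, mul_one, Measure.real]
  -- bound the measure of the middle interval
  set B : ℝ := (Real.sqrt (2 * Real.pi * (σ * τ)))⁻¹ * Real.exp (-r ^ 2 / (2 * (σ * τ)))
    with hBdef
  have hμS : (μ (Set.Ioo (-t) t)).toReal ≤ 2 * t * B := by
    have happly : μ (Set.Ioo (-t) t) =
        ENNReal.ofReal (∫ x in Set.Ioo (-t) t, gaussianPDFReal d (σ * τ).toNNReal x) :=
      gaussianReal_apply_eq_integral d hστn _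
    rw [happly, ENNReal.toReal_ofReal (setIntegral_nonneg hSm
      (fun x _ => gaussianPDFReal_nonneg _ _ _))]
    have hpdfB : ∀ x ∈ Set.Ioo (-t) t, gaussianPDFReal d (σ * τ).toNNReal x ≤ B := by
      intro x hx
      have hxd : r ≤ |x - d| := by
        have h1 : |d| - |x| ≤ |d - x| := abs_sub_abs_le_abs_sub d x
        have h2 : |x| < t := abs_lt.mpr ⟨hx.1, hx.2⟩
        have h3 : t + r ≤ |d| := by
          have : (A / 2 + ε) * s = t + r := by rw [htdef, hrdef]; ring
          rw [← this]; exact hd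
        rw [abs_sub_comm]
        linarith
      have hsq : r ^ 2 ≤ (x - d) ^ 2 :=
        (pow_le_pow_left₀ hr.le hxd 2).trans_eq (sq_abs _)
      rw [gaussianPDFReal, hστc, hBdef]
      have h2στ : (0 : ℝ) < 2 * (σ * τ) := by positivity
      have hexp : -(x - d) ^ 2 / (2 * (σ * τ)) ≤ -r ^ 2 / (2 * (σ * τ)) := by
        gcongr <;> linarith
      exact mul_le_mul_of_nonneg_left (Real.exp_le_exp.mpr hexp) (by positivity)
    calc ∫ x in Set.Ioo (-t) t, gaussianPDFReal d (σ * τ).toNNReal x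
        ≤ ∫ _x in Set.Ioo (-t) t, B :=
          setIntegral_mono_on ((integrable_gaussianPDFReal d _).integrableOn)
            (integrableOn_const measure_Ioo_lt_top.ne) hSm hpdfB
      _ = 2 * t * B := by
          rw [setIntegral_const, Measure.real, Real.volume_Ioo]
          rw [ENNReal.toReal_ofReal (by linarith)]
          rw [smul_eq_mul]; ring
  -- final arithmetic
  have hrpow : ∀ c : ℝ, Real.exp (-c * L) = (p : ℝ) ^ (-c) := by
    intro c
    rw [Real.rpow_def_of_pos hp0, hLdef]; ring_nf
  have hterm2 : Real.exp (-(ε * A / 4) * L) ≤ (p : ℝ) ^ (-(min γ₁ (ε * A / 4))) := by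
    rw [hrpow (ε * A / 4)]
    exact Real.rpow_le_rpow_of_exponent_le hp1 (neg_le_neg (min_le_right _ _))
  have hBeq : 2 * t * B =
      (A + ε) * ((Real.sqrt (2 * Real.pi * σ))⁻¹ * Real.sqrt (L / 2)) *
        (p : ℝ) ^ (-(2 * γ₁)) := by
    have hrsq : -r ^ 2 / (2 * (σ * τ)) = -(2 * γ₁) * L := by
      rw [hrdef, mul_pow, hs2, hγ₁def]
      field_simp
      ring
    have hsplit : Real.sqrt (2 * Real.pi * (σ * τ)) =
        Real.sqrt (2 * Real.pi * σ) * Real.sqrt τ := by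
      rw [← Real.sqrt_mul (by positivity) τ]; ring_nf
    have hss : s = Real.sqrt τ * Real.sqrt (L / 2) := by
      rw [hsdef, ← Real.sqrt_mul hτ.le, mul_div_assoc]
    rw [hBdef, hrsq, hrpow (2 * γ₁), hsplit, htdef, hss, mul_inv]
    have hsτ : Real.sqrt τ ≠ 0 := by positivity
    field_simp
  have hsqrtL : Real.sqrt (L / 2) ≤ (Real.sqrt (2 * γ₁))⁻¹ * (p : ℝ) ^ γ₁ := by
    have hlog : L ≤ (2 * γ₁)⁻¹ * (p : ℝ) ^ (2 * γ₁) := by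
      have h1 : Real.log ((p : ℝ) ^ (2 * γ₁)) = (2 * γ₁) * L := Real.log_rpow hp0 _
      have h2 : Real.log ((p : ℝ) ^ (2 * γ₁)) ≤ (p : ℝ) ^ (2 * γ₁) := by
        have := Real.log_le_sub_one_of_pos (Real.rpow_pos_of_pos hp0 (2 * γ₁))
        linarith
      rw [h1] at h2
      have h2γ : (0 : ℝ) < 2 * γ₁ := by positivity
      calc L = (2 * γ₁)⁻¹ * ((2 * γ₁) * L) := by field_simp
        _ ≤ (2 * γ₁)⁻¹ * (p : ℝ) ^ (2 * γ₁) := by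
            exact mul_le_mul_of_nonneg_left h2 (by positivity)
    have h3 : L / 2 ≤ (2 * γ₁)⁻¹ * (p : ℝ) ^ (2 * γ₁) := le_trans (by linarith) hlog
    calc Real.sqrt (L / 2) ≤ Real.sqrt ((2 * γ₁)⁻¹ * (p : ℝ) ^ (2 * γ₁)) :=
          Real.sqrt_le_sqrt h3
      _ = (Real.sqrt (2 * γ₁))⁻¹ * (p : ℝ) ^ γ₁ := by
          rw [Real.sqrt_mul (by positivity : (0:ℝ) ≤ (2 * γ₁)⁻¹) _, Real.sqrt_inv]
          congr 1
          rw [Real.sqrt_eq_rpow, ← Real.rpow_mul hp0.le,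
            show (2 * γ₁) * (1 / 2 : ℝ) = γ₁ by ring]
  have hterm1 : 2 * t * B ≤
      (A + ε) * (Real.sqrt (2 * Real.pi * σ))⁻¹ * (Real.sqrt (2 * γ₁))⁻¹ *
        (p : ℝ) ^ (-(min γ₁ (ε * A / 4))) := by
    rw [hBeq]
    calc (A + ε) * ((Real.sqrt (2 * Real.pi * σ))⁻¹ * Real.sqrt (L / 2)) *
          (p : ℝ) ^ (-(2 * γ₁))
        ≤ (A + ε) * ((Real.sqrt (2 * Real.pi * σ))⁻¹ *
            ((Real.sqrt (2 * γ₁))⁻¹ * (p : ℝ) ^ γ₁)) * (p : ℝ) ^ (-(2 * γ₁)) := by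
          gcongr <;> first
            | positivity
            | exact hsqrtL
      _ = (A + ε) * (Real.sqrt (2 * Real.pi * σ))⁻¹ * (Real.sqrt (2 * γ₁))⁻¹ *
            ((p : ℝ) ^ γ₁ * (p : ℝ) ^ (-(2 * γ₁))) := by ring
      _ = (A + ε) * (Real.sqrt (2 * Real.pi * σ))⁻¹ * (Real.sqrt (2 * γ₁))⁻¹ *
            (p : ℝ) ^ (-γ₁) := by
          rw [← Real.rpow_add hp0]; ring_nf
      _ ≤ (A + ε) * (Real.sqrt (2 * Real.pi * σ))⁻¹ * (Real.sqrt (2 * γ₁))⁻¹ *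
            (p : ℝ) ^ (-(min γ₁ (ε * A / 4))) := by
          gcongr <;> first
            | positivity
            | exact hp1
            | exact min_le_left _ _
  calc ∫ x, (1 - shrinkQ σ b p τ x) ∂μ
      ≤ (μ (Set.Ioo (-t) t)).toReal + Real.exp (-(ε * A / 4) * L) := hI1
    _ ≤ 2 * t * B + Real.exp (-(ε * A / 4) * L) := by linarith
    _ ≤ (A + ε) * (Real.sqrt (2 * Real.pi * σ))⁻¹ * (Real.sqrt (2 * γ₁))⁻¹ *
          (p : ℝ) ^ (-(min γ₁ (ε * A / 4))) +
        (p : ℝ) ^ (-(min γ₁ (ε * A / 4))) := add_le_add hterm1 hterm2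
    _ = ((A + ε) * (Real.sqrt (2 * Real.pi * σ))⁻¹ * (Real.sqrt (2 * γ₁))⁻¹ + 1) *
          (p : ℝ) ^ (-(min γ₁ (ε * A / 4))) := by ring
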